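/- Exact recovery under a nullspace-type condition: suppose A : ℝ^m → ℝ^n is injective and y = A x₀ + e₀ where e₀ is supported on a set S with the property that for every nonzero z in the range of A, ∑_{i∈S} |z i| < ∑_{i∉S} |z i|. Then x₀ is the unique minimizer of x ↦ ‖y - A x‖₁. -/

import Mathlib

theorem stmt14 {m n : ℕ} (A : (Fin m → ℝ) →ₗ[ℝ] (Fin n → ℝ))
    (hA : Function.Injective A) (x₀ : Fin m → ℝ) (e₀ : Fin n → ℝ)
    (S : Finset (Fin n)) (hsupp : ∀ i ∉ S, e₀ i = 0)
    (y : Fin n → ℝ) (hy : y = A x₀ + e₀)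
    (hNSP : ∀ u : Fin m → ℝ, A u ≠ 0 →
      (∑ i ∈ S, |A u i|) < ∑ i ∈ Sᶜ, |A u i|) :
    ∀ x : Fin m → ℝ, x ≠ x₀ →
      (∑ i, |y i - A x₀ i|) < ∑ i, |y i - A x i| := by
  intro x hx
  have hAne : A (x - x₀) ≠ 0 := by
    intro h
    apply hx
    have : A x = A x₀ := by
      have := sub_eq_zero.mp (by simpa [map_sub] using h)
      exact this
    exact hA this
  have key := hNSP (x - x₀) hAne
  have hz : ∀ i, A (x - x₀) i = A x i - A x₀ i := by
    intro i; simp [map_sub]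
  -- LHS
  have hLHS : (∑ i, |y i - A x₀ i|) = ∑ i ∈ S, |e₀ i| := by
    rw [← Finset.sum_subset (Finset.subset_univ S)]
    · apply Finset.sum_congr rfl
      intro i _; simp [hy]
    · intro i _ hiS; simp [hy, hsupp i hiS]
  have hsplit : (∑ i, |y i - A x i|) = (∑ i ∈ S, |y i - A x i|) + ∑ i ∈ Sᶜ, |y i - A x i| := by
    exact (Finset.sum_add_sum_compl S _).symm
  have hSc : (∑ i ∈ Sᶜ, |y i - A x i|) = ∑ i ∈ Sᶜ, |A (x - x₀) i| := by
    apply Finset.sum_congr rfl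
    intro i hi
    rw [hz i]
    have : e₀ i = 0 := hsupp i (by simpa using hi)
    simp [hy, this, abs_sub_comm]
  have hS : ∀ i ∈ S, |e₀ i| - |A (x - x₀) i| ≤ |y i - A x i| := by
    intro i _
    have : y i - A x i = e₀ i - A (x - x₀) i := by
      rw [hz i]; simp [hy]; ring
    rw [this]
    exact abs_sub_abs_le_abs_sub _ _
  calc (∑ i, |y i - A x₀ i|) = ∑ i ∈ S, |e₀ i| := hLHS
    _ < (∑ i ∈ S, (|e₀ i| - |A (x - x₀) i|)) + ∑ i ∈ Sᶜ, |A (x - x₀) i| := by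
        rw [Finset.sum_sub_distrib]; linarith
    _ ≤ (∑ i ∈ S, |y i - A x i|) + ∑ i ∈ Sᶜ, |y i - A x i| := by
        rw [hSc]
        exact add_le_add (Finset.sum_le_sum hS) le_rfl
    _ = ∑ i, |y i - A x i| := hsplit.symm
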